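/- Let d ≥ 1, let F : ℝ^d × ℝ^d × ℝ → ℝ be continuous and ℤ^d-periodic in its second argument, and let f₁, f₂ : ℝ^d → ℝ be continuous and ℤ^d-periodic. Assume that for every ε > 0 and every open ball B ⊂ ℝ^d one has ∫_B (F(x, x/ε, f₁(x/ε)) − F(x, x/ε, f₂(x/ε))) (f₁(x/ε) − f₂(x/ε)) dx ≥ 0. Then for every x ∈ ℝ^d, ∫_{[0,1]^d} (F(x, y, f₁(y)) − F(x, y, f₂(y))) (f₁(y) − f₂(y)) dy ≥ 0. -/

import Mathlib

open MeasureTheory Filter Submodule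

variable {d : ℕ}

local notation "E" => EuclideanSpace ℝ (Fin d)

noncomputable def cellIco (d : ℕ) : Set (EuclideanSpace ℝ (Fin d)) :=
  (WithLp.ofLp : EuclideanSpace ℝ (Fin d) → (Fin d → ℝ)) ⁻¹' Set.univ.pi fun _ : Fin d => Set.Ico (0 : ℝ) 1

noncomputable def stdB (d : ℕ) : Module.Basis (Fin d) ℝ (EuclideanSpace ℝ (Fin d)) :=
  (Pi.basisFun ℝ (Fin d)).map (WithLp.linearEquiv 2 ℝ (Fin d → ℝ)).symm

lemma fund_eq : ZSpan.fundamentalDomain (stdB d) = cellIco d := by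
  ext y
  simp [stdB, cellIco, ZSpan.fundamentalDomain, Module.Basis.map_repr, Pi.basisFun_repr,
    Set.mem_pi]

lemma cellIco_vol : volume (cellIco d) = 1 := by
  have : cellIco d = (MeasurableEquiv.toLp 2 (Fin d → ℝ)).symm ⁻¹'
      (Set.univ.pi fun _ : Fin d => Set.Ico (0 : ℝ) 1) := rfl
  rw [this]
  rw [(EuclideanSpace.volume_preserving_symm_measurableEquiv_toLp (Fin d)).measure_preimage
    (MeasurableSet.univ_pi fun _ => measurableSet_Ico).nullMeasurableSet]
  rw [volume_pi_pi]
  simp [Real.volume_Ico]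

lemma coord_stdB (y : EuclideanSpace ℝ (Fin d)) (i : Fin d) : (stdB d).repr y i = y i := by
  simp [stdB, Module.Basis.map_repr, Pi.basisFun_repr]

lemma shift_cell (G : EuclideanSpace ℝ (Fin d) → ℝ)
    (hper : ∀ (y : EuclideanSpace ℝ (Fin d)) (k : Fin d → ℤ),
      G (y + (WithLp.equiv 2 (Fin d → ℝ)).symm (fun i => (k i : ℝ))) = G y)
    (v : EuclideanSpace ℝ (Fin d)) :
    ∫ y in cellIco d, G (v + y) = ∫ y in cellIco d, G y := by
  have hD : IsAddFundamentalDomain (span ℤ (Set.range (stdB d))).toAddSubgroup (cellIco d) volume :=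
    fund_eq ▸ ZSpan.isAddFundamentalDomain' (stdB d) volume
  have hmp : MeasurePreserving (fun x : EuclideanSpace ℝ (Fin d) => v + x) volume volume :=
    measurePreserving_add_left volume v
  have hemb : MeasurableEmbedding (fun x : EuclideanSpace ℝ (Fin d) => v + x) :=
    (MeasurableEquiv.addLeft v).measurableEmbedding
  have hD' : IsAddFundamentalDomain (span ℤ (Set.range (stdB d))).toAddSubgroup
      ((fun x => v + x) '' cellIco d) volume := by
    refine hD.image_of_equiv (Equiv.addLeft v) ?_ (Equiv.refl _) ?_
    · exact (measurePreserving_add_left volume (-v)).quasiMeasurePreserving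
    · intro g x
      show v + (g +ᵥ x) = g +ᵥ (v + x)
      show v + (↑g + x) = ↑g + (v + x)
      exact add_left_comm v (↑g) x
  have hinv : ∀ (g : (span ℤ (Set.range (stdB d))).toAddSubgroup) (x : EuclideanSpace ℝ (Fin d)),
      G (g +ᵥ x) = G x := by
    intro g x
    have hg := g.2
    have h := fun i => ((stdB d).mem_span_iff_repr_mem ℤ _).mp hg i
    choose k hk using h
    have hgk : (g : EuclideanSpace ℝ (Fin d)) =
        (WithLp.equiv 2 (Fin d → ℝ)).symm (fun i => (k i : ℝ)) := by
      apply (WithLp.equiv 2 (Fin d → ℝ)).injective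
      funext i
      have h1 := hk i
      rw [coord_stdB (g : EuclideanSpace ℝ (Fin d)) i] at h1
      simpa using h1.symm
    show G (↑g + x) = G x
    rw [add_comm, hgk]
    exact hper x k
  have : Countable (span ℤ (Set.range ⇑(stdB d))).toAddSubgroup :=
    (inferInstance : Countable (span ℤ (Set.range ⇑(stdB d))))
  calc ∫ y in cellIco d, G (v + y)
      = ∫ y in (fun x => v + x) '' cellIco d, G y := (hmp.setIntegral_image_emb hemb G _).symm
    _ = ∫ y in cellIco d, G y := hD'.setIntegral_eq hD hinv

noncomputable def cellIcc (d : ℕ) : Set (EuclideanSpace ℝ (Fin d)) :=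
  (WithLp.ofLp : EuclideanSpace ℝ (Fin d) → (Fin d → ℝ)) ⁻¹' Set.univ.pi fun _ : Fin d => Set.Icc (0 : ℝ) 1

lemma cellIcc_compact : IsCompact (cellIcc d) := by
  have h : IsCompact (Set.univ.pi fun _ : Fin d => Set.Icc (0 : ℝ) 1) :=
    isCompact_univ_pi fun _ => isCompact_Icc
  have : cellIcc d = (EuclideanSpace.equiv (Fin d) ℝ).toHomeomorph ⁻¹'
      (Set.univ.pi fun _ : Fin d => Set.Icc (0 : ℝ) 1) := rfl
  rw [this, Homeomorph.isCompact_preimage]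
  exact h

lemma exists_bound (G : EuclideanSpace ℝ (Fin d) → ℝ) (hGc : Continuous G)
    (hper : ∀ (y : EuclideanSpace ℝ (Fin d)) (k : Fin d → ℤ),
      G (y + (WithLp.equiv 2 (Fin d → ℝ)).symm (fun i => (k i : ℝ))) = G y) :
    ∃ C : ℝ, 0 ≤ C ∧ ∀ y, |G y| ≤ C := by
  obtain ⟨C, hC⟩ := (cellIcc_compact (d := d)).exists_bound_of_continuousOn hGc.continuousOn
  have h0 : (0 : EuclideanSpace ℝ (Fin d)) ∈ cellIcc d := by
    intro i _
    constructor <;> norm_num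
  refine ⟨C, le_trans (abs_nonneg _) (by simpa [Real.norm_eq_abs] using hC 0 h0), fun y => ?_⟩
  set k : Fin d → ℤ := fun i => ⌊y i⌋ with hk
  set y' : EuclideanSpace ℝ (Fin d) :=
    (WithLp.equiv 2 (Fin d → ℝ)).symm (fun i => Int.fract (y i)) with hy'
  have hdecomp : y = y' + (WithLp.equiv 2 (Fin d → ℝ)).symm (fun i => (k i : ℝ)) := by
    apply (WithLp.equiv 2 (Fin d → ℝ)).injective
    funext i
    show y i = Int.fract (y i) + (k i : ℝ)
    rw [hk]
    exact (Int.fract_add_floor (y i)).symm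
  have hmem : y' ∈ cellIcc d := by
    intro i _
    exact ⟨Int.fract_nonneg _, (Int.fract_lt_one _).le⟩
  have : G y = G y' := by rw [hdecomp]; exact hper y' k
  rw [this]
  simpa [Real.norm_eq_abs] using hC y' hmem

lemma integrable_of_bound {α : Type*} [MeasurableSpace α] [TopologicalSpace α]
    [OpensMeasurableSpace α] (μ : Measure α) [IsFiniteMeasure μ] (g : α → ℝ)
    (hc : Continuous g) (C : ℝ) (hC : ∀ x, |g x| ≤ C) : Integrable g μ := by
  refine Integrable.mono' (integrable_const C) hc.aestronglyMeasurable
    (ae_of_all _ fun x => ?_)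
  simpa [Real.norm_eq_abs] using hC x

lemma restrict_finite {α : Type*} [MeasurableSpace α] (μ : Measure α) (s : Set α)
    (hs : μ s ≠ ⊤) : IsFiniteMeasure (μ.restrict s) :=
  ⟨by rw [Measure.restrict_apply_univ]; exact hs.lt_top⟩

lemma integrableOn_of_bound (g : EuclideanSpace ℝ (Fin d) → ℝ) (hc : Continuous g) (C : ℝ)
    (hC : ∀ x, |g x| ≤ C) (s : Set (EuclideanSpace ℝ (Fin d))) (hs : volume s ≠ ⊤) :
    IntegrableOn g s := by
  have := restrict_finite volume s hs
  exact integrable_of_bound _ g hc C hC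

lemma setIntegral_translate (g : EuclideanSpace ℝ (Fin d) → ℝ) (u : EuclideanSpace ℝ (Fin d))
    (s : Set (EuclideanSpace ℝ (Fin d))) :
    ∫ x in s, g (x + u) = ∫ y in (fun x => x + u) '' s, g y :=
  ((measurePreserving_add_right volume u).setIntegral_image_emb
    (MeasurableEquiv.addRight u).measurableEmbedding g s).symm

lemma image_ball_bounds (c u : EuclideanSpace ℝ (Fin d)) (r s : ℝ) (hu : ‖u‖ ≤ s) :
    Metric.ball c (r - s) ⊆ (fun x => x + u) '' Metric.ball c r ∧
      (fun x => x + u) '' Metric.ball c r ⊆ Metric.ball c (r + s) := by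
  constructor
  · intro y hy
    refine ⟨y - u, ?_, sub_add_cancel y u⟩
    rw [Metric.mem_ball] at hy ⊢
    calc dist (y - u) c ≤ dist (y - u) y + dist y c := dist_triangle _ _ _
      _ = ‖u‖ + dist y c := by rw [dist_self_sub_left]
      _ < s + (r - s) := by linarith
      _ = r := by ring
  · rintro y ⟨x, hx, rfl⟩
    rw [Metric.mem_ball] at hx ⊢
    calc dist (x + u) c ≤ dist (x + u) x + dist x c := dist_triangle _ _ _
      _ = ‖u‖ + dist x c := by rw [dist_self_add_left]
      _ < s + r := by linarith
      _ = r + s := by ring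

lemma sandwich_bound (g : EuclideanSpace ℝ (Fin d) → ℝ) (hc : Continuous g) (C : ℝ)
    (hC : ∀ x, |g x| ≤ C) (c : EuclideanSpace ℝ (Fin d)) (r s : ℝ) (hs : 0 ≤ s)
    (S : Set (EuclideanSpace ℝ (Fin d))) (hS : MeasurableSet S)
    (h1 : Metric.ball c (r - s) ⊆ S) (h2 : S ⊆ Metric.ball c (r + s)) :
    |(∫ x in S, g x) - ∫ x in Metric.ball c (r - s), g x| ≤
      C * (volume (Metric.ball c (r + s) \ Metric.ball c (r - s))).toReal := by
  have hfin : volume (Metric.ball c (r + s)) ≠ ⊤ := measure_ball_lt_top.ne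
  have hSfin : volume S ≠ ⊤ := fun h => hfin (top_le_iff.mp (h ▸ measure_mono h2))
  have hint : IntegrableOn g S := integrableOn_of_bound g hc C hC S hSfin
  have hC0 : 0 ≤ C := le_trans (abs_nonneg _) (hC 0)
  have hdiff : (∫ x in S, g x) - ∫ x in Metric.ball c (r - s), g x
      = ∫ x in S \ Metric.ball c (r - s), g x := by
    rw [sub_eq_iff_eq_add, ← setIntegral_union Set.disjoint_sdiff_left measurableSet_ball
      (hint.mono_set Set.diff_subset) (hint.mono_set h1), Set.diff_union_of_subset h1]
  rw [hdiff]
  have hsub : S \ Metric.ball c (r - s) ⊆ Metric.ball c (r + s) \ Metric.ball c (r - s) :=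
    Set.diff_subset_diff_left h2
  have hm2 : volume (S \ Metric.ball c (r - s)) ≠ ⊤ :=
    fun h => hSfin (top_le_iff.mp (h ▸ measure_mono Set.diff_subset))
  calc |∫ x in S \ Metric.ball c (r - s), g x|
      ≤ C * (volume (S \ Metric.ball c (r - s))).toReal := by
        have := norm_setIntegral_le_of_norm_le_const (μ := volume)
          (s := S \ Metric.ball c (r - s)) (f := g) hm2.lt_top
          (fun x _ => by simpa [Real.norm_eq_abs] using hC x)
        simpa [Real.norm_eq_abs, Measure.real] using this
    _ ≤ C * (volume (Metric.ball c (r + s) \ Metric.ball c (r - s))).toReal := by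
        apply mul_le_mul_of_nonneg_left _ hC0
        apply ENNReal.toReal_mono _ (measure_mono hsub)
        exact fun h => hfin (top_le_iff.mp (h ▸ measure_mono Set.diff_subset))

lemma norm_cell_le (t : EuclideanSpace ℝ (Fin d)) (ht : t ∈ cellIcc d) :
    ‖t‖ ≤ Real.sqrt d := by
  rw [EuclideanSpace.norm_eq]
  apply Real.sqrt_le_sqrt
  calc (∑ i, ‖t i‖ ^ 2) ≤ ∑ _i : Fin d, (1 : ℝ) := by
        apply Finset.sum_le_sum
        intro i _
        have hi := ht i (Set.mem_univ i)
        have : |t i| ≤ 1 := abs_le.mpr ⟨by linarith [hi.1], hi.2⟩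
        calc ‖t i‖ ^ 2 = |t i| ^ 2 := by rw [Real.norm_eq_abs]
          _ ≤ 1 ^ 2 := pow_le_pow_left₀ (abs_nonneg _) this 2
          _ = 1 := one_pow 2
    _ = d := by simp

lemma cellIco_subset_cellIcc : cellIco d ⊆ cellIcc d := fun t ht i hi =>
  ⟨(ht i hi).1, (ht i hi).2.le⟩

lemma avg_bound (G : EuclideanSpace ℝ (Fin d) → ℝ) (hGc : Continuous G)
    (hper : ∀ (y : EuclideanSpace ℝ (Fin d)) (k : Fin d → ℤ),
      G (y + (WithLp.equiv 2 (Fin d → ℝ)).symm (fun i => (k i : ℝ))) = G y)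
    (C : ℝ) (hC : ∀ y, |G y| ≤ C)
    (c : EuclideanSpace ℝ (Fin d)) (r : ℝ) (ε : ℝ) (hε : 0 < ε) :
    |(∫ x in Metric.ball c r, G (ε⁻¹ • x)) -
        (∫ y in cellIco d, G y) * (volume (Metric.ball c r)).toReal| ≤
      2 * (C * (volume (Metric.ball c (r + ε * Real.sqrt d) \
        Metric.ball c (r - ε * Real.sqrt d))).toReal) := by
  have hC0 : 0 ≤ C := le_trans (abs_nonneg _) (hC 0)
  set s : ℝ := ε * Real.sqrt d with hs_def
  have hs : 0 ≤ s := mul_nonneg hε.le (Real.sqrt_nonneg _)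
  set I : ℝ := ∫ y in cellIco d, G y with hI
  set B := Metric.ball c r with hB
  set g : EuclideanSpace ℝ (Fin d) → ℝ := fun x => G (ε⁻¹ • x) with hg
  have hgc : Continuous g := hGc.comp (continuous_const_smul _)
  have hgC : ∀ x, |g x| ≤ C := fun x => hC _
  set A : ℝ := C * (volume (Metric.ball c (r + s) \ Metric.ball c (r - s))).toReal with hA
  have hA0 : 0 ≤ A := mul_nonneg hC0 ENNReal.toReal_nonneg
  -- finiteness of restricted measures
  have hcellfin : IsFiniteMeasure (volume.restrict (cellIco d)) :=
    restrict_finite volume _ (by rw [cellIco_vol]; exact ENNReal.one_ne_top)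
  have hBfin : IsFiniteMeasure (volume.restrict B) :=
    restrict_finite volume _ measure_ball_lt_top.ne
  -- the product integrand
  have hΦc : Continuous fun p : EuclideanSpace ℝ (Fin d) × EuclideanSpace ℝ (Fin d) =>
      G (ε⁻¹ • p.2 + p.1) :=
    hGc.comp (by fun_prop)
  have hΦint : Integrable (fun p : EuclideanSpace ℝ (Fin d) × EuclideanSpace ℝ (Fin d) =>
      G (ε⁻¹ • p.2 + p.1)) ((volume.restrict (cellIco d)).prod (volume.restrict B)) :=
    integrable_of_bound _ _ hΦc C fun p => hC _
  -- Fubini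
  have hswap : (∫ t in cellIco d, ∫ x in B, G (ε⁻¹ • x + t)) =
      ∫ x in B, ∫ t in cellIco d, G (ε⁻¹ • x + t) := by
    exact integral_integral_swap hΦint
  have hinner : ∀ x : EuclideanSpace ℝ (Fin d), (∫ t in cellIco d, G (ε⁻¹ • x + t)) = I :=
    fun x => shift_cell G hper (ε⁻¹ • x)
  have hJ : (∫ t in cellIco d, ∫ x in B, G (ε⁻¹ • x + t)) = I * (volume B).toReal := by
    rw [hswap]
    simp only [hinner]
    rw [setIntegral_const, smul_eq_mul, mul_comm, Measure.real]
  -- the per-t bound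
  have hTbound : ∀ t ∈ cellIco d,
      |(∫ x in B, G (ε⁻¹ • x + t)) - ∫ x in B, g x| ≤ 2 * A := by
    intro t ht
    have htn : ‖ε • t‖ ≤ s := by
      rw [norm_smul, Real.norm_eq_abs, abs_of_pos hε]
      exact mul_le_mul_of_nonneg_left (norm_cell_le t (cellIco_subset_cellIcc ht)) hε.le
    have hxt : ∀ x : EuclideanSpace ℝ (Fin d), G (ε⁻¹ • x + t) = g (x + ε • t) := by
      intro x
      simp only [hg]
      congr 1
      rw [smul_add, smul_smul, inv_mul_cancel₀ hε.ne', one_smul]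
    have htrans : (∫ x in B, G (ε⁻¹ • x + t)) = ∫ y in (fun x => x + ε • t) '' B, g y := by
      simp_rw [hxt]
      exact setIntegral_translate g (ε • t) B
    obtain ⟨hsub1, hsub2⟩ := image_ball_bounds c (ε • t) r s htn
    have hSmeas : MeasurableSet ((fun x => x + ε • t) '' B) := by
      rw [Set.image_eq_preimage_of_inverse (g := fun x => x - ε • t)
        (fun x => add_sub_cancel_right x _) (fun x => sub_add_cancel x _)]
      exact measurableSet_ball.preimage (measurable_id.sub_const _)
    have h1 := sandwich_bound g hgc C hgC c r s hs _ hSmeas hsub1 hsub2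
    have h2 := sandwich_bound g hgc C hgC c r s hs B measurableSet_ball
      (Metric.ball_subset_ball (by linarith)) (Metric.ball_subset_ball (by linarith))
    rw [htrans]
    calc |(∫ y in (fun x => x + ε • t) '' B, g y) - ∫ x in B, g x|
        ≤ |(∫ y in (fun x => x + ε • t) '' B, g y) - ∫ x in Metric.ball c (r - s), g x| +
          |(∫ x in Metric.ball c (r - s), g x) - ∫ x in B, g x| := abs_sub_le _ _ _
      _ = |(∫ y in (fun x => x + ε • t) '' B, g y) - ∫ x in Metric.ball c (r - s), g x| +
          |(∫ x in B, g x) - ∫ x in Metric.ball c (r - s), g x| := by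
            rw [abs_sub_comm (∫ x in Metric.ball c (r - s), g x)]
      _ ≤ A + A := add_le_add h1 h2
      _ = 2 * A := by ring
  have hφint : Integrable (fun t => ∫ x in B, G (ε⁻¹ • x + t)) (volume.restrict (cellIco d)) :=
    hΦint.integral_prod_left
  have hvol1 : (volume (cellIco d)).toReal = 1 := by rw [cellIco_vol]; simp
  have hconst : (∫ _t in cellIco d, (∫ x in B, g x)) = ∫ x in B, g x := by
    rw [setIntegral_const, smul_eq_mul, Measure.real, hvol1, one_mul]
  have hkey : (∫ x in B, g x) - I * (volume B).toReal
      = ∫ t in cellIco d, ((∫ x in B, g x) - ∫ x in B, G (ε⁻¹ • x + t)) := by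
    rw [integral_sub (integrable_const _) hφint, hconst, hJ]
  have : |(∫ x in B, g x) - I * (volume B).toReal| ≤ 2 * A := by
    rw [hkey]
    calc |∫ t in cellIco d, ((∫ x in B, g x) - ∫ x in B, G (ε⁻¹ • x + t))|
        ≤ (2 * A) * (volume (cellIco d)).toReal := by
          have := norm_setIntegral_le_of_norm_le_const (μ := volume) (s := cellIco d)
            (f := fun t => (∫ x in B, g x) - ∫ x in B, G (ε⁻¹ • x + t))
            (by rw [cellIco_vol]; exact ENNReal.one_lt_top)
            (fun t ht => by
              rw [Real.norm_eq_abs, abs_sub_comm]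
              exact hTbound t ht)
          simpa [Real.norm_eq_abs, Measure.real] using this
      _ = 2 * A := by rw [hvol1, mul_one]
  exact this

lemma decomp_cell (y : EuclideanSpace ℝ (Fin d)) :
    ∃ (y' : EuclideanSpace ℝ (Fin d)) (k : Fin d → ℤ), y' ∈ cellIcc d ∧
      y = y' + (WithLp.equiv 2 (Fin d → ℝ)).symm (fun i => (k i : ℝ)) := by
  refine ⟨(WithLp.equiv 2 (Fin d → ℝ)).symm (fun i => Int.fract (y i)), fun i => ⌊y i⌋, ?_, ?_⟩
  · intro i _
    exact ⟨Int.fract_nonneg _, (Int.fract_lt_one _).le⟩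
  · apply (WithLp.equiv 2 (Fin d → ℝ)).injective
    funext i
    show y i = Int.fract (y i) + (⌊y i⌋ : ℝ)
    exact (Int.fract_add_floor (y i)).symm

lemma hyperplane_null (i : Fin d) (a : ℝ) :
    volume {y : EuclideanSpace ℝ (Fin d) | y i = a} = 0 := by
  have : {y : EuclideanSpace ℝ (Fin d) | y i = a} =
      (MeasurableEquiv.toLp 2 (Fin d → ℝ)).symm ⁻¹' {x : Fin d → ℝ | x i = a} := rfl
  rw [this, (EuclideanSpace.volume_preserving_symm_measurableEquiv_toLp (Fin d)).measure_preimage]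
  · rw [volume_pi]
    exact Measure.pi_hyperplane (μ := fun _ : Fin d => (volume : Measure ℝ)) i a
  · have : {x : Fin d → ℝ | x i = a} = Function.eval i ⁻¹' ({a} : Set ℝ) := rfl
    rw [this]
    exact ((measurable_pi_apply i) (measurableSet_singleton a)).nullMeasurableSet

lemma cell_ae : (cellIcc d : Set (EuclideanSpace ℝ (Fin d))) =ᵐ[volume] cellIco d := by
  rw [MeasureTheory.ae_eq_set]
  constructor
  · refine measure_mono_null ?_ (measure_iUnion_null fun i : Fin d => hyperplane_null i 1)
    · intro y hy
      obtain ⟨hicc, hico⟩ := hy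
      have hex : ∃ i, ¬ (y i ∈ Set.Ico (0 : ℝ) 1) := by
        by_contra hall
        push_neg at hall
        exact hico fun i _ => hall i
      obtain ⟨i, hi⟩ := hex
      have h1 := hicc i (Set.mem_univ i)
      rw [Set.mem_Ico] at hi
      push_neg at hi
      have : y i = 1 := le_antisymm h1.2 (hi h1.1)
      exact Set.mem_iUnion.mpr ⟨i, this⟩
  · have : cellIco d \ cellIcc d = ∅ := by
      rw [Set.diff_eq_empty]
      exact cellIco_subset_cellIcc
    rw [this, measure_empty]

lemma annulus_tendsto (c : EuclideanSpace ℝ (Fin d)) (r : ℝ) (hd : 1 ≤ d) :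
    Filter.Tendsto (fun ε : ℝ => (volume (Metric.ball c (r + ε * Real.sqrt d) \
      Metric.ball c (r - ε * Real.sqrt d))).toReal) (nhdsWithin 0 (Set.Ioi 0)) (nhds 0) := by
  have : Nonempty (Fin d) := ⟨⟨0, hd⟩⟩
  set κ : ℝ := Real.sqrt Real.pi ^ d / Real.Gamma ((d : ℝ) / 2 + 1) with hκ
  have hvol : ∀ ρ : ℝ, (volume (Metric.ball c ρ)).toReal = max ρ 0 ^ d * max κ 0 := by
    intro ρ
    rw [EuclideanSpace.volume_ball]
    rw [ENNReal.toReal_mul, ENNReal.toReal_pow, ENNReal.toReal_ofReal', ENNReal.toReal_ofReal']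
    simp only [Fintype.card_fin, hκ]
  have hsub : ∀ ε : ℝ, 0 < ε → (volume (Metric.ball c (r + ε * Real.sqrt d) \
      Metric.ball c (r - ε * Real.sqrt d))).toReal =
      (volume (Metric.ball c (r + ε * Real.sqrt d))).toReal -
      (volume (Metric.ball c (r - ε * Real.sqrt d))).toReal := by
    intro ε hε
    have hsb : Metric.ball c (r - ε * Real.sqrt d) ⊆ Metric.ball c (r + ε * Real.sqrt d) :=
      Metric.ball_subset_ball (by nlinarith [Real.sqrt_nonneg (d : ℝ)])
    rw [measure_diff hsb measurableSet_ball.nullMeasurableSet measure_ball_lt_top.ne,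
      ENNReal.toReal_sub_of_le (measure_mono hsb) measure_ball_lt_top.ne]
  have hcont : Filter.Tendsto (fun ε : ℝ =>
      (max (r + ε * Real.sqrt d) 0 ^ d * max κ 0) -
      (max (r - ε * Real.sqrt d) 0 ^ d * max κ 0)) (nhds 0) (nhds 0) := by
    have h : Continuous fun ε : ℝ =>
        (max (r + ε * Real.sqrt d) 0 ^ d * max κ 0) -
        (max (r - ε * Real.sqrt d) 0 ^ d * max κ 0) := by fun_prop
    have := h.tendsto 0
    simpa using this
  apply Filter.Tendsto.congr' _ (hcont.mono_left nhdsWithin_le_nhds)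
  filter_upwards [self_mem_nhdsWithin] with ε hε
  rw [hsub ε hε, hvol, hvol]

/-- necessary cell-monotonicity condition for a local coupling. -/
theorem stmt4 (d : ℕ) (hd : 1 ≤ d)
    (F : EuclideanSpace ℝ (Fin d) → EuclideanSpace ℝ (Fin d) → ℝ → ℝ)
    (hF_cont : Continuous
      fun p : EuclideanSpace ℝ (Fin d) × EuclideanSpace ℝ (Fin d) × ℝ => F p.1 p.2.1 p.2.2)
    (hF_per : ∀ (x y : EuclideanSpace ℝ (Fin d)) (m : ℝ) (k : Fin d → ℤ),
      F x (y + (WithLp.equiv 2 (Fin d → ℝ)).symm (fun i => (k i : ℝ))) m = F x y m)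
    (f₁ f₂ : EuclideanSpace ℝ (Fin d) → ℝ)
    (hf₁_cont : Continuous f₁) (hf₂_cont : Continuous f₂)
    (hf₁_per : ∀ (y : EuclideanSpace ℝ (Fin d)) (k : Fin d → ℤ),
      f₁ (y + (WithLp.equiv 2 (Fin d → ℝ)).symm (fun i => (k i : ℝ))) = f₁ y)
    (hf₂_per : ∀ (y : EuclideanSpace ℝ (Fin d)) (k : Fin d → ℤ),
      f₂ (y + (WithLp.equiv 2 (Fin d → ℝ)).symm (fun i => (k i : ℝ))) = f₂ y)
    (hmono : ∀ ε > (0 : ℝ), ∀ (c : EuclideanSpace ℝ (Fin d)) (r : ℝ), 0 < r →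
      0 ≤ ∫ x in Metric.ball c r,
        (F x (ε⁻¹ • x) (f₁ (ε⁻¹ • x)) - F x (ε⁻¹ • x) (f₂ (ε⁻¹ • x)))
          * (f₁ (ε⁻¹ • x) - f₂ (ε⁻¹ • x))) :
    ∀ x : EuclideanSpace ℝ (Fin d),
      0 ≤ ∫ y in Set.univ.pi fun _ : Fin d => Set.Icc (0 : ℝ) 1,
        (F x (WithLp.toLp 2 y) (f₁ (WithLp.toLp 2 y)) - F x (WithLp.toLp 2 y) (f₂ (WithLp.toLp 2 y)))
          * (f₁ (WithLp.toLp 2 y) - f₂ (WithLp.toLp 2 y)) := by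
  intro x₀
  have hH2c : Continuous fun p : EuclideanSpace ℝ (Fin d) × EuclideanSpace ℝ (Fin d) =>
      (F p.1 p.2 (f₁ p.2) - F p.1 p.2 (f₂ p.2)) * (f₁ p.2 - f₂ p.2) := by
    have c1 : Continuous fun p : EuclideanSpace ℝ (Fin d) × EuclideanSpace ℝ (Fin d) =>
        F p.1 p.2 (f₁ p.2) :=
      hF_cont.comp (continuous_fst.prodMk (continuous_snd.prodMk
        (hf₁_cont.comp continuous_snd)))
    have c2 : Continuous fun p : EuclideanSpace ℝ (Fin d) × EuclideanSpace ℝ (Fin d) =>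
        F p.1 p.2 (f₂ p.2) :=
      hF_cont.comp (continuous_fst.prodMk (continuous_snd.prodMk
        (hf₂_cont.comp continuous_snd)))
    exact (c1.sub c2).mul ((hf₁_cont.comp continuous_snd).sub (hf₂_cont.comp continuous_snd))
  set H2 : EuclideanSpace ℝ (Fin d) × EuclideanSpace ℝ (Fin d) → ℝ :=
    fun p => (F p.1 p.2 (f₁ p.2) - F p.1 p.2 (f₂ p.2)) * (f₁ p.2 - f₂ p.2) with hH2def
  set G : EuclideanSpace ℝ (Fin d) → ℝ := fun y => H2 (x₀, y) with hGdef
  have hGc : Continuous G := hH2c.comp (continuous_const.prodMk continuous_id)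
  have hH2per : ∀ (x y : EuclideanSpace ℝ (Fin d)) (k : Fin d → ℤ),
      H2 (x, y + (WithLp.equiv 2 (Fin d → ℝ)).symm (fun i => (k i : ℝ))) = H2 (x, y) := by
    intro x y k
    simp only [hH2def]
    rw [hF_per, hF_per, hf₁_per, hf₂_per]
  have hGper : ∀ (y : EuclideanSpace ℝ (Fin d)) (k : Fin d → ℤ),
      G (y + (WithLp.equiv 2 (Fin d → ℝ)).symm (fun i => (k i : ℝ))) = G y :=
    fun y k => hH2per x₀ y k
  have htrans : (∫ y in Set.univ.pi fun _ : Fin d => Set.Icc (0 : ℝ) 1,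
      (F x₀ (WithLp.toLp 2 y) (f₁ (WithLp.toLp 2 y)) - F x₀ (WithLp.toLp 2 y) (f₂ (WithLp.toLp 2 y)))
        * (f₁ (WithLp.toLp 2 y) - f₂ (WithLp.toLp 2 y))) = ∫ y in cellIcc d, G y := by
    have h := ((EuclideanSpace.volume_preserving_symm_measurableEquiv_toLp (Fin d)).symm).setIntegral_preimage_emb
      (MeasurableEquiv.toLp 2 (Fin d → ℝ)).symm.symm.measurableEmbedding G (cellIcc d)
    exact h
  rw [htrans, setIntegral_congr_set cell_ae]
  set I : ℝ := ∫ y in cellIco d, G y with hIdef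
  suffices h : ∀ δ : ℝ, 0 < δ → -δ ≤ I by
    by_contra hneg
    push_neg at hneg
    have := h (-I / 2) (by linarith)
    linarith
  intro δ hδ
  obtain ⟨C, hC0, hC⟩ := exists_bound G hGc hGper
  -- uniform continuity on a compact product
  have hK : IsCompact (Metric.closedBall x₀ 1 ×ˢ cellIcc d) :=
    (isCompact_closedBall x₀ 1).prod cellIcc_compact
  have huc := hK.uniformContinuousOn_of_continuous hH2c.continuousOn
  rw [Metric.uniformContinuousOn_iff] at huc
  obtain ⟨ρ, hρ, hρ'⟩ := huc δ hδ
  set r : ℝ := min (ρ / 2) 1 with hr_def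
  have hr : 0 < r := lt_min (by linarith) one_pos
  have hr1 : r ≤ 1 := min_le_right _ _
  set B := Metric.ball x₀ r with hBdef
  set vB : ℝ := (volume B).toReal with hvB
  have hclose : ∀ x ∈ B, ∀ y : EuclideanSpace ℝ (Fin d), |H2 (x, y) - G y| ≤ δ := by
    intro x hx y
    obtain ⟨y', k, hy', rfl⟩ := decomp_cell y
    rw [hH2per x y' k, hGper y' k]
    have hxK : (x, y') ∈ Metric.closedBall x₀ 1 ×ˢ cellIcc d :=
      ⟨Metric.mem_closedBall.mpr ((Metric.mem_ball.mp hx).le.trans hr1), hy'⟩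
    have hx0K : (x₀, y') ∈ Metric.closedBall x₀ 1 ×ˢ cellIcc d :=
      ⟨Metric.mem_closedBall_self (by norm_num), hy'⟩
    have hdist : dist (x, y') (x₀, y') < ρ := by
      rw [Prod.dist_eq]
      simp only [dist_self]
      have : dist x x₀ < r := Metric.mem_ball.mp hx
      have h2 : r ≤ ρ / 2 := min_le_left _ _
      calc max (dist x x₀) 0 ≤ dist x x₀ ⊔ 0 := le_refl _
        _ < ρ := by
          rw [sup_lt_iff]
          constructor <;> linarith
    have := hρ' _ hxK _ hx0K hdist
    rw [Real.dist_eq] at this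
    exact this.le
  have hstep : ∀ ε : ℝ, 0 < ε →
      -δ * vB - 2 * (C * (volume (Metric.ball x₀ (r + ε * Real.sqrt d) \
        Metric.ball x₀ (r - ε * Real.sqrt d))).toReal) ≤ I * vB := by
    intro ε hε
    have h0 : 0 ≤ ∫ x in B, H2 (x, ε⁻¹ • x) := hmono ε hε x₀ r hr
    have hint1 : IntegrableOn (fun x => H2 (x, ε⁻¹ • x)) B :=
      ((hH2c.comp (continuous_id.prodMk (continuous_const_smul _))).continuousOn.integrableOn_compact
        (isCompact_closedBall x₀ r)).mono_set Metric.ball_subset_closedBall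
    have hint2 : IntegrableOn (fun x => G (ε⁻¹ • x)) B :=
      integrableOn_of_bound _ (hGc.comp (continuous_const_smul _)) C (fun x => hC _) B
        measure_ball_lt_top.ne
    have hsplit : (∫ x in B, (H2 (x, ε⁻¹ • x) - G (ε⁻¹ • x))) =
        (∫ x in B, H2 (x, ε⁻¹ • x)) - ∫ x in B, G (ε⁻¹ • x) := integral_sub hint1 hint2
    have hdiffb : |∫ x in B, (H2 (x, ε⁻¹ • x) - G (ε⁻¹ • x))| ≤ δ * vB := by
      have := norm_setIntegral_le_of_norm_le_const (μ := volume) (s := B)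
        (f := fun x => H2 (x, ε⁻¹ • x) - G (ε⁻¹ • x)) measure_ball_lt_top
        (fun x hx => by
          rw [Real.norm_eq_abs]
          exact hclose x hx (ε⁻¹ • x))
      simpa [Real.norm_eq_abs, Measure.real] using this
    have hG_lb : -δ * vB ≤ ∫ x in B, G (ε⁻¹ • x) := by
      have h1 := (abs_le.mp hdiffb).2
      rw [hsplit] at h1
      linarith
    have havg := avg_bound G hGc hGper C hC x₀ r ε hε
    have h2 := (abs_le.mp havg).2
    linarith
  have htend := annulus_tendsto x₀ r hd
  have hlim : Filter.Tendsto (fun ε : ℝ =>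
      -δ * vB - 2 * (C * (volume (Metric.ball x₀ (r + ε * Real.sqrt d) \
        Metric.ball x₀ (r - ε * Real.sqrt d))).toReal)) (nhdsWithin 0 (Set.Ioi 0))
      (nhds (-δ * vB)) := by
    have : Filter.Tendsto (fun ε : ℝ =>
        2 * (C * (volume (Metric.ball x₀ (r + ε * Real.sqrt d) \
          Metric.ball x₀ (r - ε * Real.sqrt d))).toReal)) (nhdsWithin 0 (Set.Ioi 0))
        (nhds 0) := by
      have := (htend.const_mul C).const_mul 2
      simpa using this
    simpa using (tendsto_const_nhds (x := -δ * vB)).sub this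
  have hfin : -δ * vB ≤ I * vB := by
    apply le_of_tendsto hlim
    filter_upwards [self_mem_nhdsWithin] with ε hε
    exact hstep ε hε
  have hvpos : 0 < vB :=
    ENNReal.toReal_pos (Metric.measure_ball_pos volume x₀ hr).ne' measure_ball_lt_top.ne
  nlinarith
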